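/- Let h : (a,b) → ℝ be C^k with h'(x) ≠ 0 for all x ∈ (a,b), and suppose h has an inverse h⁻¹ : h((a,b)) → (a,b). Then for all x ∈ (a,b) and 1 ≤ l ≤ k, the l-th derivative of the inverse satisfies (h⁻¹)^{(l)}(h(x)) = Σ_{m=0}^{l-1} ((-1)^m / m!) (h'(x))^{-l-m} Σ_{b ∈ ℕ^m} ((l-1+m)! / (b₁!⋯b_m!)) h^{(b₁)}(x) ⋯ h^{(b_m)}(x), where the inner sum runs over tuples b = (b₁,…,b_m) with b₁+⋯+b_m = l-1+m and each b_i ≥ 2. -/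

import Mathlib

open Set

open Finset Filter Topology

noncomputable section

/-- The index set: tuples of `m` integers, each `≥ 2`, summing to `n + m`. -/
def Tn (n m : ℕ) : Finset (Fin m → ℕ) :=
  (Finset.Nat.antidiagonalTuple m (n + m)).filter fun bb => ∀ i, 2 ≤ bb i

lemma mem_Tn {n m : ℕ} {bb : Fin m → ℕ} :
    bb ∈ Tn n m ↔ (∑ i, bb i) = n + m ∧ ∀ i, 2 ≤ bb i := by
  simp [Tn, Finset.Nat.mem_antidiagonalTuple]

lemma Tn_empty {n m : ℕ} (h : n < m) : Tn n m = ∅ := by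
  ext bb
  simp only [mem_Tn, Finset.notMem_empty, iff_false, not_and]
  intro hs h2
  have h2m : 2 * m ≤ ∑ i, bb i := by
    calc 2 * m = ∑ _i : Fin m, 2 := by simp [mul_comm]
    _ ≤ _ := Finset.sum_le_sum fun i _ => h2 i
  omega

def Sv (v : ℕ → ℝ) (n m : ℕ) : ℝ :=
  ∑ bb ∈ Tn n m, (((n + m).factorial : ℝ) / ∏ i, ((bb i).factorial : ℝ)) * ∏ i, v (bb i)

def Dt (v : ℕ → ℝ) (n m : ℕ) : ℝ :=
  ∑ bb ∈ Tn n m, (((n + m).factorial : ℝ) / ∏ i, ((bb i).factorial : ℝ)) *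
    ∑ i, (∏ j ∈ Finset.univ.erase i, v (bb j)) * v (bb i + 1)

/-- The key combinatorial recursion. -/
lemma sum_split {m : ℕ} (bb : Fin m → ℕ) (i : Fin m) :
    ∑ j, bb j = bb i + ∑ j ∈ Finset.univ \ {i}, bb j := by
  rw [← Finset.erase_eq]
  exact (Finset.add_sum_erase _ _ (Finset.mem_univ i)).symm

lemma Sv_succ (v : ℕ → ℝ) (n m : ℕ) :
    Sv v (n + 1) m = Dt v n m + m * (n + m) * v 2 * Sv v n (m - 1) := by
  rcases m with _ | m
  · have h1 : Tn (n + 1) 0 = ∅ := by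
      ext bb; simp [mem_Tn]
    simp [Sv, Dt, h1]
  -- m+1 case
  have hfact : ((n + 1 + (m + 1)).factorial : ℝ) = (n + m + 2) * ((n + m + 1).factorial : ℝ) := by
    have : n + 1 + (m + 1) = (n + m + 1) + 1 := by omega
    rw [this, Nat.factorial_succ]; push_cast; ring
  -- Step 1: expand the weight using ∑ b' i = n + m + 2
  have step1 : Sv v (n + 1) (m + 1) =
      ∑ p ∈ (Tn (n + 1) (m + 1)) ×ˢ (Finset.univ : Finset (Fin (m + 1))),
        (p.1 p.2 : ℝ) * (((n + m + 1).factorial : ℝ) / ∏ i, ((p.1 i).factorial : ℝ)) *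
          ∏ i, v (p.1 i) := by
    rw [Finset.sum_product]
    refine Finset.sum_congr rfl fun bb hbb => ?_
    obtain ⟨hs, h2⟩ := mem_Tn.1 hbb
    have hsum : (∑ i, (bb i : ℝ)) = (n + m + 2 : ℝ) := by
      rw [← Nat.cast_sum, hs]; push_cast; ring
    dsimp only
    rw [← Finset.sum_mul, ← Finset.sum_mul, hsum, hfact]
    ring
  -- split by whether the distinguished coordinate is ≥ 3 or = 2
  rw [step1, ← Finset.sum_filter_add_sum_filter_not _ (fun p => 3 ≤ p.1 p.2)]
  congr 1
  · -- part A: equals Dt v n (m+1)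
    rw [Dt]
    rw [Finset.sum_congr rfl (fun bb (hbb : bb ∈ Tn n (m + 1)) => (Finset.mul_sum _ _ _ :
      (((n + (m + 1)).factorial : ℝ) / ∏ i, ((bb i).factorial : ℝ)) *
        (∑ i, (∏ j ∈ Finset.univ.erase i, v (bb j)) * v (bb i + 1)) = _)),
      ← Finset.sum_product']
    refine Finset.sum_nbij' (fun p => (Function.update p.1 p.2 (p.1 p.2 - 1), p.2))
      (fun q => (Function.update q.1 q.2 (q.1 q.2 + 1), q.2)) ?_ ?_ ?_ ?_ ?_
    · rintro ⟨bb, i⟩ hp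
      rw [Finset.mem_filter, Finset.mem_product] at hp
      obtain ⟨⟨hbb, -⟩, h3⟩ := hp
      obtain ⟨hs, h2⟩ := mem_Tn.1 hbb
      dsimp only at h3 hs h2 ⊢
      simp only [Finset.mem_product, Finset.mem_univ, and_true]
      rw [mem_Tn]
      constructor
      · rw [Finset.sum_update_of_mem (Finset.mem_univ i)]
        rw [sum_split bb i] at hs
        omega
      · intro j
        rcases eq_or_ne j i with rfl | hj
        · rw [Function.update_self]; omega
        · rw [Function.update_of_ne hj]; exact h2 j
    · rintro ⟨bb, i⟩ hq
      rw [Finset.mem_product] at hq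
      obtain ⟨hbb, -⟩ := hq
      obtain ⟨hs, h2⟩ := mem_Tn.1 hbb
      dsimp only at hs h2 ⊢
      rw [Finset.mem_filter, Finset.mem_product]
      refine ⟨⟨mem_Tn.2 ⟨?_, ?_⟩, Finset.mem_univ _⟩, ?_⟩
      · rw [Finset.sum_update_of_mem (Finset.mem_univ i)]
        rw [sum_split bb i] at hs
        omega
      · intro j
        rcases eq_or_ne j i with rfl | hj
        · have := h2 j; simp only [Prod.fst]; rw [Function.update_self]; omega
        · simp only [Prod.fst]; rw [Function.update_of_ne hj]; exact h2 j
      · simp only [Prod.fst, Prod.snd]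
        rw [Function.update_self]
        have := h2 i; omega
    · rintro ⟨bb, i⟩ hp
      rw [Finset.mem_filter, Finset.mem_product] at hp
      obtain ⟨⟨hbb, -⟩, h3⟩ := hp
      dsimp only at h3 ⊢
      have hbi : bb i - 1 + 1 = bb i := by omega
      rw [Function.update_self, Function.update_idem, hbi, Function.update_eq_self]
    · rintro ⟨bb, i⟩ hq
      dsimp only
      rw [Function.update_self, Function.update_idem, Nat.add_sub_cancel,
        Function.update_eq_self]
    · rintro ⟨bb, i⟩ hp
      rw [Finset.mem_filter, Finset.mem_product] at hp
      obtain ⟨⟨hbb, -⟩, h3⟩ := hp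
      obtain ⟨hs, h2⟩ := mem_Tn.1 hbb
      dsimp only at h3 hs h2 ⊢
      have hupd : ∀ j ∈ Finset.univ.erase i, Function.update bb i (bb i - 1) j = bb j := by
        intro j hj
        exact Function.update_of_ne (Finset.ne_of_mem_erase hj) _ _
      have hpf : (∏ j, ((Function.update bb i (bb i - 1) j).factorial : ℝ)) =
          ((bb i - 1).factorial : ℝ) * ∏ j ∈ Finset.univ.erase i, ((bb j).factorial : ℝ) := by
        rw [← Finset.mul_prod_erase _ _ (Finset.mem_univ i), Function.update_self]
        exact congrArg _ (Finset.prod_congr rfl fun j hj => by rw [hupd j hj])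
      have hpv : (∏ j ∈ Finset.univ.erase i, v (Function.update bb i (bb i - 1) j)) =
          ∏ j ∈ Finset.univ.erase i, v (bb j) :=
        Finset.prod_congr rfl fun j hj => by rw [hupd j hj]
      have hvv : Function.update bb i (bb i - 1) i + 1 = bb i := by
        rw [Function.update_self]; omega
      have hPv : (∏ j, v (bb j)) = v (bb i) * ∏ j ∈ Finset.univ.erase i, v (bb j) :=
        (Finset.mul_prod_erase _ _ (Finset.mem_univ i)).symm
      have hPf : (∏ j, ((bb j).factorial : ℝ)) =
          ((bb i : ℝ) * ((bb i - 1).factorial : ℝ)) *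
            ∏ j ∈ Finset.univ.erase i, ((bb j).factorial : ℝ) := by
        rw [← Finset.mul_prod_erase _ (fun j => ((bb j).factorial : ℝ)) (Finset.mem_univ i)]
        congr 1
        rw [← Nat.cast_mul, Nat.mul_factorial_pred (by omega)]
      have hfe : ((n + (m + 1)).factorial : ℝ) = ((n + m + 1).factorial : ℝ) := by
        norm_num [show n + (m + 1) = n + m + 1 by omega]
      rw [hpf, hpv, hvv, hPv, hPf, hfe]
      have hb0 : (bb i : ℝ) ≠ 0 := by
        have := h2 i; positivity
      have hc0 : (((bb i - 1).factorial : ℕ) : ℝ) ≠ 0 := Nat.cast_ne_zero.2 (Nat.factorial_ne_zero _)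
      have hR0 : (∏ j ∈ Finset.univ.erase i, ((bb j).factorial : ℝ)) ≠ 0 :=
        Finset.prod_ne_zero_iff.2 fun j _ => Nat.cast_ne_zero.2 (Nat.factorial_ne_zero _)
      field_simp
  · -- part B
    have hC : (((m + 1 : ℕ) : ℝ)) * ((n : ℝ) + ((m + 1 : ℕ) : ℝ)) * v 2 * Sv v n ((m + 1) - 1) =
        ∑ q ∈ (Finset.univ : Finset (Fin (m + 1))) ×ˢ Tn n m,
          ((n : ℝ) + m + 1) * (((n + m).factorial : ℝ) / ∏ i, ((q.2 i).factorial : ℝ)) *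
            (v 2 * ∏ i, v (q.2 i)) := by
      rw [Finset.sum_product, show (m + 1) - 1 = m from rfl, Sv, Finset.sum_comm,
        Finset.mul_sum]
      refine Finset.sum_congr rfl fun cc _ => ?_
      dsimp only
      rw [Finset.sum_const, Finset.card_univ, Fintype.card_fin, nsmul_eq_mul]
      push_cast
      ring
    rw [hC]
    have hfact2 : ((n + m + 1).factorial : ℝ) = ((n : ℝ) + m + 1) * ((n + m).factorial : ℝ) := by
      rw [Nat.factorial_succ]; push_cast; ring
    refine Finset.sum_nbij' (fun p => (p.2, p.2.removeNth p.1))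
      (fun q => (q.1.insertNth 2 q.2, q.1)) ?_ ?_ ?_ ?_ ?_
    · rintro ⟨bb, i⟩ hp
      rw [Finset.mem_filter, Finset.mem_product] at hp
      obtain ⟨⟨hbb, -⟩, h3⟩ := hp
      obtain ⟨hs, h2⟩ := mem_Tn.1 hbb
      dsimp only at h3 hs h2 ⊢
      have hbi : bb i = 2 := by have := h2 i; omega
      simp only [Finset.mem_product, Finset.mem_univ, true_and]
      rw [mem_Tn]
      have hsum := Fin.sum_univ_succAbove bb i
      rw [hsum, hbi] at hs
      constructor
      · show (∑ j, bb (i.succAbove j)) = n + m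
        omega
      · intro j
        exact h2 _
    · rintro ⟨i, cc⟩ hq
      rw [Finset.mem_product] at hq
      obtain ⟨-, hcc⟩ := hq
      obtain ⟨hs, h2⟩ := mem_Tn.1 hcc
      dsimp only at hs h2 ⊢
      rw [Finset.mem_filter, Finset.mem_product]
      refine ⟨⟨mem_Tn.2 ⟨?_, ?_⟩, Finset.mem_univ _⟩, ?_⟩
      · rw [Fin.sum_univ_succAbove (i.insertNth 2 cc) i, Fin.insertNth_apply_same]
        simp only [Fin.insertNth_apply_succAbove]
        omega
      · intro j
        rcases eq_or_ne j i with rfl | hj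
        · have hh : (2 : ℕ) ≤ Fin.insertNth (α := fun _ => ℕ) j 2 cc j := by
            rw [Fin.insertNth_apply_same]
          exact hh
        · obtain ⟨j', rfl⟩ := Fin.exists_succAbove_eq hj
          have hh : (2 : ℕ) ≤ Fin.insertNth (α := fun _ => ℕ) i 2 cc (i.succAbove j') := by
            rw [Fin.insertNth_apply_succAbove]
            exact h2 j'
          exact hh
      · dsimp only
        rw [Fin.insertNth_apply_same]
        omega
    · rintro ⟨bb, i⟩ hp
      rw [Finset.mem_filter, Finset.mem_product] at hp
      obtain ⟨⟨hbb, -⟩, h3⟩ := hp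
      obtain ⟨-, h2⟩ := mem_Tn.1 hbb
      dsimp only at h3 h2 ⊢
      have hbi : bb i = 2 := by have := h2 i; omega
      simp only [Prod.mk.injEq]
      refine ⟨?_, trivial⟩
      rw [Fin.insertNth_removeNth, ← hbi, Function.update_eq_self]
    · rintro ⟨i, cc⟩ hq
      dsimp only
      rw [Fin.removeNth_insertNth]
    · rintro ⟨bb, i⟩ hp
      rw [Finset.mem_filter, Finset.mem_product] at hp
      obtain ⟨⟨hbb, -⟩, h3⟩ := hp
      obtain ⟨-, h2⟩ := mem_Tn.1 hbb
      dsimp only at h3 h2 ⊢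
      have hbi : bb i = 2 := by have := h2 i; omega
      have hPf : (∏ j, ((bb j).factorial : ℝ)) =
          2 * ∏ j, ((bb (i.succAbove j)).factorial : ℝ) := by
        rw [Fin.prod_univ_succAbove (fun j => ((bb j).factorial : ℝ)) i, hbi]
        norm_num
      have hPv : (∏ j, v (bb j)) = v 2 * ∏ j, v (bb (i.succAbove j)) := by
        rw [Fin.prod_univ_succAbove (fun j => v (bb j)) i, hbi]
      have hRem : ∀ (F : ℕ → ℝ), (∏ j, F (Fin.removeNth i bb j)) = ∏ j, F (bb (i.succAbove j)) :=
        fun F => rfl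
      rw [hPf, hPv, hbi, hfact2, hRem (fun t => ((t.factorial : ℝ))), hRem v]
      have hR0 : (∏ j, ((bb (i.succAbove j)).factorial : ℝ)) ≠ 0 :=
        Finset.prod_ne_zero_iff.2 fun j _ => Nat.cast_ne_zero.2 (Nat.factorial_ne_zero _)
      field_simp
      ring

/-- The formula expression at level `n` (representing the `(n+1)`-st derivative of the
inverse), with `y` the first derivative and `v j` the `j`-th derivative of `h`. -/
def Fe (y : ℝ) (v : ℕ → ℝ) (n : ℕ) : ℝ :=
  ∑ m ∈ Finset.range (n + 1),
    ((-1 : ℝ) ^ m / (m.factorial : ℝ)) * y ^ (-(n + 1 : ℤ) - m) * Sv v n m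

lemma alg (y : ℝ) (hy : y ≠ 0) (v : ℕ → ℝ) (n : ℕ) :
    ∑ m ∈ Finset.range (n + 1), ((-1 : ℝ) ^ m / (m.factorial : ℝ)) *
      ((-(n + 1 : ℤ) - m : ℤ) * y ^ (-(n + 1 : ℤ) - m - 1) * v 2 * Sv v n m
        + y ^ (-(n + 1 : ℤ) - m) * Dt v n m)
      = y * Fe y v (n + 1) := by
  rw [Fe, Finset.mul_sum]
  refine Eq.symm ?_
  have h1 : ∀ m ∈ Finset.range (n + 1 + 1),
      y * (((-1 : ℝ) ^ m / (m.factorial : ℝ)) * y ^ (-(((n + 1 : ℕ) : ℤ) + 1) - m) * Sv v (n + 1) m)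
      = ((-1 : ℝ) ^ m / (m.factorial : ℝ)) * y ^ (-(n + 1 : ℤ) - m) * Dt v n m
        + ((-1 : ℝ) ^ m / (m.factorial : ℝ)) * y ^ (-(n + 1 : ℤ) - m) *
            ((m : ℝ) * ((n : ℝ) + m) * v 2 * Sv v n (m - 1)) := by
    intro m _
    rw [Sv_succ]
    rw [show (-(((n + 1 : ℕ) : ℤ) + 1) - m) = (-(n + 1 : ℤ) - m) + (-1) by push_cast; ring,
      zpow_add₀ hy, zpow_neg, zpow_one]
    field_simp
  rw [Finset.sum_congr rfl h1, Finset.sum_add_distrib]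
  have hDt0 : Dt v n (n + 1) = 0 := by
    rw [Dt, Tn_empty (Nat.lt_succ_self n), Finset.sum_empty]
  rw [Finset.sum_range_succ
    (fun m => ((-1 : ℝ) ^ m / (m.factorial : ℝ)) * y ^ (-(n + 1 : ℤ) - m) * Dt v n m) (n + 1)]
  rw [Finset.sum_range_succ'
    (fun m => ((-1 : ℝ) ^ m / (m.factorial : ℝ)) * y ^ (-(n + 1 : ℤ) - m) *
      ((m : ℝ) * ((n : ℝ) + m) * v 2 * Sv v n (m - 1))) (n + 1)]
  simp only [hDt0]
  rw [show ((-1 : ℝ) ^ (0 : ℕ) / ((0 : ℕ).factorial : ℝ)) * y ^ (-(n + 1 : ℤ) - (0 : ℕ)) *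
      (((0 : ℕ) : ℝ) * ((n : ℝ) + ((0 : ℕ) : ℝ)) * v 2 * Sv v n (0 - 1)) = 0 by push_cast; ring]
  have h2 : ∀ m ∈ Finset.range (n + 1),
      ((-1 : ℝ) ^ (m + 1) / (((m + 1).factorial : ℕ) : ℝ)) * y ^ (-(n + 1 : ℤ) - ((m + 1 : ℕ) : ℤ)) *
        (((m + 1 : ℕ) : ℝ) * ((n : ℝ) + ((m + 1 : ℕ) : ℝ)) * v 2 * Sv v n ((m + 1) - 1))
      = ((-1 : ℝ) ^ m / (m.factorial : ℝ)) *
          (((-(n + 1 : ℤ) - m : ℤ) : ℝ) * y ^ (-(n + 1 : ℤ) - m - 1) * v 2 * Sv v n m) := by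
    intro m _
    rw [show (-(n + 1 : ℤ) - ((m + 1 : ℕ) : ℤ)) = (-(n + 1 : ℤ) - m - 1) by push_cast; ring,
      show (m + 1) - 1 = m from rfl, Nat.factorial_succ]
    have hm0 : ((m.factorial : ℕ) : ℝ) ≠ 0 := Nat.cast_ne_zero.2 (Nat.factorial_ne_zero _)
    push_cast
    field_simp
    ring
  rw [Finset.sum_congr rfl h2]
  simp only [mul_zero, add_zero]
  rw [← Finset.sum_add_distrib]
  refine Finset.sum_congr rfl fun m _ => by ring

lemma Tn_bound {n m : ℕ} {bb : Fin m → ℕ} (hbb : bb ∈ Tn n m) (i : Fin m) : bb i ≤ n + 1 := by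
  obtain ⟨hs, h2⟩ := mem_Tn.1 hbb
  have hsplit := sum_split bb i
  have hcard : (Finset.univ \ {i} : Finset (Fin m)).card = m - 1 := by
    rw [← Finset.erase_eq, Finset.card_erase_of_mem (Finset.mem_univ i), Finset.card_univ,
      Fintype.card_fin]
  have hlow : 2 * (m - 1) ≤ ∑ j ∈ Finset.univ \ {i}, bb j := by
    calc 2 * (m - 1) = ∑ _j ∈ (Finset.univ \ {i} : Finset (Fin m)), 2 := by
          rw [Finset.sum_const, hcard, smul_eq_mul, mul_comm]
    _ ≤ _ := Finset.sum_le_sum fun j _ => h2 j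
  have hm : 1 ≤ m := by
    rcases Nat.eq_zero_or_pos m with hm0 | hm1
    · exact absurd (hm0 ▸ i).2 (by omega)
    · exact hm1
  omega

lemma Sv_zero (v : ℕ → ℝ) : Sv v 0 0 = 1 := by
  have hT : Tn 0 0 = {![]} := by
    ext bb
    simp only [mem_Tn, Finset.mem_singleton]
    constructor
    · intro _; exact Subsingleton.elim _ _
    · intro _; exact ⟨by simp, fun i => absurd i.2 (by omega)⟩
  rw [Sv, hT, Finset.sum_singleton]
  simp

lemma Fe_zero (y : ℝ) (v : ℕ → ℝ) : Fe y v 0 = y⁻¹ := by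
  rw [Fe, Finset.sum_range_one, Sv_zero]
  norm_num

lemma itD_EqOn_open {f : ℝ → ℝ} {s : Set ℝ} (hs : IsOpen s) (n : ℕ) :
    Set.EqOn (iteratedDerivWithin n f s) (iteratedDeriv n f) s := fun t ht => by
  rw [iteratedDerivWithin_eq_iteratedFDerivWithin, iteratedDeriv_eq_iteratedFDeriv,
    iteratedFDerivWithin_of_isOpen n hs ht]

lemma hasDerivAt_iteratedDeriv_of_contDiffOn {f : ℝ → ℝ} {s : Set ℝ} (hs : IsOpen s) {k : ℕ}
    (hf : ContDiffOn ℝ k f s) {j : ℕ} (hj : j < k) {t : ℝ} (ht : t ∈ s) :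
    HasDerivAt (iteratedDeriv j f) (iteratedDeriv (j + 1) f t) t := by
  have hdiff : DifferentiableOn ℝ (iteratedDerivWithin j f s) s :=
    hf.differentiableOn_iteratedDerivWithin (by exact_mod_cast hj) hs.uniqueDiffOn
  have hev : iteratedDerivWithin j f s =ᶠ[𝓝 t] iteratedDeriv j f :=
    Filter.eventuallyEq_of_mem (hs.mem_nhds ht) (itD_EqOn_open hs j)
  have hda : DifferentiableAt ℝ (iteratedDeriv j f) t :=
    (Filter.EventuallyEq.differentiableAt_iff hev).1
      ((hdiff t ht).differentiableAt (hs.mem_nhds ht))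
  rw [iteratedDeriv_succ]
  exact hda.hasDerivAt

lemma hasDerivAt_iteratedDeriv_of_contDiffAt {f : ℝ → ℝ} {k : ℕ} {y : ℝ}
    (hf : ContDiffAt ℝ k f y) {j : ℕ} (hj : j < k) :
    HasDerivAt (iteratedDeriv j f) (iteratedDeriv (j + 1) f y) y := by
  obtain ⟨u, hu, hcu⟩ := hf.contDiffOn le_rfl (by simp)
  exact hasDerivAt_iteratedDeriv_of_contDiffOn isOpen_interior
    (hcu.mono interior_subset) hj (mem_interior_iff_mem_nhds.2 hu)

lemma eventuallyEq_iteratedDeriv {f g : ℝ → ℝ} {y : ℝ} (hfg : f =ᶠ[𝓝 y] g) (n : ℕ) :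
    iteratedDeriv n f =ᶠ[𝓝 y] iteratedDeriv n g := by
  induction n with
  | zero => simpa using hfg
  | succ n ih => rw [iteratedDeriv_succ, iteratedDeriv_succ]; exact ih.deriv

/-- Higher-order derivative formula for the inverse function: if `h` is `C^k` on `(a,b)`
with nonvanishing derivative and inverse `g`, then for `1 ≤ l ≤ k`,
`g^{(l)}(h x) = Σ_{m=0}^{l-1} ((-1)^m/m!) (h'(x))^{-(l+m)}
  Σ_{b : b₁+⋯+b_m = l-1+m, b_i ≥ 2} ((l-1+m)!/(b₁!⋯b_m!)) h^{(b₁)}(x)⋯h^{(b_m)}(x)`. -/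
theorem inverse_function_higher_deriv
    (a b : ℝ) (k : ℕ) (h g : ℝ → ℝ)
    (hsm : ContDiffOn ℝ k h (Ioo a b))
    (hd : ∀ x ∈ Ioo a b, deriv h x ≠ 0)
    (hg : ∀ x ∈ Ioo a b, g (h x) = x)
    (hg' : ∀ y ∈ h '' Ioo a b, g y ∈ Ioo a b ∧ h (g y) = y) :
    ∀ x ∈ Ioo a b, ∀ l : ℕ, 1 ≤ l → l ≤ k →
      iteratedDeriv l g (h x) =
        ∑ m ∈ Finset.range l,
          ((-1 : ℝ) ^ m / (Nat.factorial m)) * (deriv h x) ^ (-(l : ℤ) - m) *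
            ∑ bb ∈ (Fintype.piFinset fun _ : Fin m => Finset.range (l + 2 * m + 1)).filter
                (fun bb : Fin m → ℕ => (∑ i, bb i) = l - 1 + m ∧ ∀ i, 2 ≤ bb i),
              ((Nat.factorial (l - 1 + m) : ℝ) / ∏ i, (Nat.factorial (bb i) : ℝ)) *
                ∏ i, iteratedDeriv (bb i) h x := by
  have hopen : IsOpen (Ioo a b) := isOpen_Ioo
  have main : ∀ n : ℕ, n + 1 ≤ k → ∀ x ∈ Ioo a b,
      iteratedDeriv (n + 1) g (h x) = Fe (deriv h x) (fun j => iteratedDeriv j h x) n := by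
    intro n
    induction n with
    | zero =>
      intro hk x hx
      have hCx : ContDiffAt ℝ k h x := hsm.contDiffAt (hopen.mem_nhds hx)
      have hk1 : (k : WithTop ℕ∞) ≠ 0 := by exact_mod_cast (show k ≠ 0 by omega)
      have hstrict : HasStrictDerivAt h (deriv h x) x := hCx.hasStrictDerivAt hk1
      have hgev : ∀ᶠ t in 𝓝 x, g (h t) = t :=
        Filter.eventually_of_mem (hopen.mem_nhds hx) fun t ht => hg t ht
      have hinv : HasStrictDerivAt g (deriv h x)⁻¹ (h x) :=
        hstrict.to_local_left_inverse (hd x hx) hgev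
      rw [show (0 : ℕ) + 1 = 1 from rfl, iteratedDeriv_one, Fe_zero]
      exact hinv.hasDerivAt.deriv
    | succ n ih =>
      intro hk x hx
      have hCx : ContDiffAt ℝ k h x := hsm.contDiffAt (hopen.mem_nhds hx)
      have hk1 : (k : WithTop ℕ∞) ≠ 0 := by
        have : k ≠ 0 := by omega
        exact_mod_cast this
      have hd' := hd x hx
      -- local inverse
      set f' : ℝ ≃L[ℝ] ℝ :=
        ContinuousLinearEquiv.unitsEquivAut ℝ (Units.mk0 (deriv h x) hd') with hf'def
      have hda : DifferentiableAt ℝ h x := hCx.differentiableAt hk1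
      have hFD : HasFDerivAt h (f' : ℝ →L[ℝ] ℝ) x := by
        have h1 := hda.hasDerivAt.hasFDerivAt
        convert h1 using 1 <;> first | rfl | (ext; simp [hf'def])
      set φ : ℝ → ℝ := hCx.localInverse hFD hk1 with hφdef
      have hφ : ContDiffAt ℝ k φ (h x) := hCx.to_localInverse hFD hk1
      have hsfd : HasStrictFDerivAt h (f' : ℝ →L[ℝ] ℝ) x := hCx.hasStrictFDerivAt' hFD hk1
      have hφx : φ (h x) = x := hCx.localInverse_apply_image hFD hk1
      have hcont : ContinuousAt φ (h x) := hsfd.localInverse_continuousAt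
      have hmem : ∀ᶠ y in 𝓝 (h x), φ y ∈ Ioo a b := by
        have h0 : Ioo a b ∈ 𝓝 (φ (h x)) := by rw [hφx]; exact hopen.mem_nhds hx
        exact Filter.eventually_of_mem (hcont.preimage_mem_nhds h0) fun y hy => hy
      have hri : ∀ᶠ y in 𝓝 (h x), h (φ y) = y := hsfd.eventually_right_inverse
      have hlinv : g =ᶠ[𝓝 (h x)] φ := by
        filter_upwards [hmem, hri] with y hy1 hy2
        calc g y = g (h (φ y)) := by rw [hy2]
          _ = φ y := hg _ hy1
      -- derivative of the left side
      have hφder : HasDerivAt (iteratedDeriv (n + 1) φ) (iteratedDeriv (n + 2) φ (h x)) (h x) :=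
        hasDerivAt_iteratedDeriv_of_contDiffAt hφ (by omega)
      have hgder : HasDerivAt (iteratedDeriv (n + 1) g) (iteratedDeriv (n + 2) g (h x)) (h x) := by
        have h1 := hφder.congr_of_eventuallyEq (eventuallyEq_iteratedDeriv hlinv (n + 1))
        rwa [← (eventuallyEq_iteratedDeriv hlinv (n + 2)).eq_of_nhds] at h1
      have hchain : HasDerivAt (iteratedDeriv (n + 1) g ∘ h)
          (iteratedDeriv (n + 2) g (h x) * deriv h x) x := hgder.comp x hda.hasDerivAt
      have hev : (iteratedDeriv (n + 1) g ∘ h) =ᶠ[𝓝 x]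
          (fun s => Fe (deriv h s) (fun j => iteratedDeriv j h s) n) :=
        Filter.eventually_of_mem (hopen.mem_nhds hx) fun t ht => ih (by omega) t ht
      have hFder : HasDerivAt (fun s => Fe (deriv h s) (fun j => iteratedDeriv j h s) n)
          (iteratedDeriv (n + 2) g (h x) * deriv h x) x :=
        hchain.congr_of_eventuallyEq hev.symm
      -- derivative of the right side, computed explicitly
      have hz : HasDerivAt (fun s => deriv h s) (iteratedDeriv 2 h x) x := by
        have h1 := hasDerivAt_iteratedDeriv_of_contDiffOn hopen hsm
          (j := 1) (by omega) hx
        rwa [iteratedDeriv_one] at h1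
      have hterm : ∀ m ∈ Finset.range (n + 1),
          HasDerivAt (fun s => ((-1 : ℝ) ^ m / (m.factorial : ℝ)) *
              (deriv h s) ^ (-(n + 1 : ℤ) - m) * Sv (fun j => iteratedDeriv j h s) n m)
            (((-1 : ℝ) ^ m / (m.factorial : ℝ)) *
              (((-(n + 1 : ℤ) - m : ℤ) : ℝ) * (deriv h x) ^ (-(n + 1 : ℤ) - m - 1) *
                iteratedDeriv 2 h x) * Sv (fun j => iteratedDeriv j h x) n m
              + ((-1 : ℝ) ^ m / (m.factorial : ℝ)) * (deriv h x) ^ (-(n + 1 : ℤ) - m) *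
                Dt (fun j => iteratedDeriv j h x) n m) x := by
        intro m _
        have hzpow : HasDerivAt (fun s => (deriv h s) ^ (-(n + 1 : ℤ) - m))
            ((((-(n + 1 : ℤ) - m : ℤ) : ℝ) * (deriv h x) ^ (-(n + 1 : ℤ) - m - 1)) *
              iteratedDeriv 2 h x) x :=
          (hasDerivAt_zpow (-(n + 1 : ℤ) - m) (deriv h x) (Or.inl hd')).comp x hz
        have hS : HasDerivAt (fun s => Sv (fun j => iteratedDeriv j h s) n m)
            (Dt (fun j => iteratedDeriv j h x) n m) x := by
          simp only [Sv, Dt]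
          refine HasDerivAt.fun_sum fun bb hbb => ?_
          refine HasDerivAt.const_mul _ ?_
          have hprod := HasDerivAt.fun_finsetProd (u := Finset.univ)
            (f := fun i s => iteratedDeriv (bb i) h s)
            (f' := fun i => iteratedDeriv (bb i + 1) h x) (x := x) ?_
          · simpa [smul_eq_mul, mul_comm] using hprod
          · intro i _
            exact hasDerivAt_iteratedDeriv_of_contDiffOn hopen hsm
              (by have := Tn_bound hbb i; omega) hx
        exact (hzpow.const_mul ((-1 : ℝ) ^ m / (m.factorial : ℝ))).mul hS
      have hA : HasDerivAt (fun s => Fe (deriv h s) (fun j => iteratedDeriv j h s) n)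
          (∑ m ∈ Finset.range (n + 1),
            (((-1 : ℝ) ^ m / (m.factorial : ℝ)) *
              (((-(n + 1 : ℤ) - m : ℤ) : ℝ) * (deriv h x) ^ (-(n + 1 : ℤ) - m - 1) *
                iteratedDeriv 2 h x) * Sv (fun j => iteratedDeriv j h x) n m
              + ((-1 : ℝ) ^ m / (m.factorial : ℝ)) * (deriv h x) ^ (-(n + 1 : ℤ) - m) *
                Dt (fun j => iteratedDeriv j h x) n m)) x := by
        simp only [Fe]
        exact HasDerivAt.fun_sum hterm
      have huniq := hA.unique hFder
      have halg := alg (deriv h x) hd' (fun j => iteratedDeriv j h x) n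
      have halg2 : (∑ m ∈ Finset.range (n + 1),
            (((-1 : ℝ) ^ m / (m.factorial : ℝ)) *
              (((-(n + 1 : ℤ) - m : ℤ) : ℝ) * (deriv h x) ^ (-(n + 1 : ℤ) - m - 1) *
                iteratedDeriv 2 h x) * Sv (fun j => iteratedDeriv j h x) n m
              + ((-1 : ℝ) ^ m / (m.factorial : ℝ)) * (deriv h x) ^ (-(n + 1 : ℤ) - m) *
                Dt (fun j => iteratedDeriv j h x) n m))
          = deriv h x * Fe (deriv h x) (fun j => iteratedDeriv j h x) (n + 1) := by
        refine Eq.trans (Finset.sum_congr rfl fun m _ => ?_) halg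
        ring
      rw [halg2] at huniq
      refine mul_right_cancel₀ hd' ?_
      rw [← huniq]
      ring
  intro x hx l hl1 hlk
  obtain ⟨n, rfl⟩ : ∃ n, l = n + 1 := ⟨l - 1, by omega⟩
  rw [main n hlk x hx, Fe]
  refine Finset.sum_congr rfl fun m hm => ?_
  have hset : (Fintype.piFinset fun _ : Fin m => Finset.range (n + 1 + 2 * m + 1)).filter
      (fun bb : Fin m → ℕ => (∑ i, bb i) = (n + 1) - 1 + m ∧ ∀ i, 2 ≤ bb i) = Tn n m := by
    ext bb
    simp only [Finset.mem_filter, Fintype.mem_piFinset, Finset.mem_range, mem_Tn,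
      Nat.add_sub_cancel]
    constructor
    · rintro ⟨-, hs, h2⟩; exact ⟨hs, h2⟩
    · rintro ⟨hs, h2⟩
      refine ⟨fun i => ?_, hs, h2⟩
      have : bb i ≤ ∑ j, bb j := Finset.single_le_sum (fun j _ => Nat.zero_le _) (Finset.mem_univ i)
      omega
  rw [hset]
  have hexp : (-(((n + 1 : ℕ) : ℤ)) - (m : ℤ)) = (-(n + 1 : ℤ) - m) := by push_cast; ring
  rw [hexp, Sv, Nat.add_sub_cancel]

end
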